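/- Let 0 < r ≤ p ≤ 1. The map g : ℂ → ℂ defined by g(z) = |z|^{(p/r)−1} z for z ≠ 0 and g(0) = 0 maps S_r onto S_p, i.e., g(S_r) = S_p, and its restriction to the closed disk centered at 0 of radius (2π)^{-r} (which contains S_r) is Lipschitz: there is C > 0 with |g(z) − g(w)| ≤ C|z − w| for all z, w in this disk. In particular, there exists a surjective Lipschitz map from S_r onto S_p. -/

import Mathlib

/-- The parametrizing map `t ↦ φ(t) e^{it}` of a spiral. -/
noncomputable def spiralMap (φ : ℝ → ℝ) : ℝ → ℂ :=
  fun t => (φ t : ℂ) * Complex.exp (t * Complex.I)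

/-- The spiral `S_φ = {φ(t) e^{it} : t ∈ [2π, ∞)} ∪ {0}`. -/
noncomputable def spiral (φ : ℝ → ℝ) : Set ℂ :=
  spiralMap φ '' Set.Ici (2 * Real.pi) ∪ {0}

/-- The polynomial spiral `S_p = {t^{-p} e^{it} : t ∈ [2π, ∞)} ∪ {0}`. -/
noncomputable def polySpiral (p : ℝ) : Set ℂ :=
  spiral (fun t => t ^ (-p))

/-- Key elementary inequality: for `0 ≤ α`, `0 ≤ b ≤ a ≤ R`,
`(a^α - b^α) * b ≤ α * R^α * (a - b)`. -/
lemma key_rpow_lemma {R α a b : ℝ} (hα : 0 ≤ α) (hb : 0 ≤ b) (hba : b ≤ a) (haR : a ≤ R) :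
    (a ^ α - b ^ α) * b ≤ α * R ^ α * (a - b) := by
  have ha : 0 ≤ a := hb.trans hba
  have hR : 0 ≤ R := ha.trans haR
  rcases eq_or_lt_of_le hb with rfl | hb
  · rw [mul_zero]
    have : 0 ≤ α * R ^ α := mul_nonneg hα (Real.rpow_nonneg hR α)
    nlinarith
  have ha' : 0 < a := hb.trans_le hba
  rcases le_or_gt 1 α with h1 | h1
  · set u : ℝ := b / a with hu
    have hu0 : 0 ≤ u := div_nonneg hb.le ha'.le
    have hu1 : u ≤ 1 := (div_le_one ha').mpr hba
    have hbeq : b = u * a := (div_mul_cancel₀ b ha'.ne').symm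
    have hB : 1 + α * (u - 1) ≤ u ^ α := by
      have := one_add_mul_self_le_rpow_one_add (s := u - 1) (by linarith) h1
      simpa using this
    have hbpow : b ^ α = u ^ α * a ^ α := by
      rw [hbeq, Real.mul_rpow hu0 ha'.le]
    have haα : 0 < a ^ α := Real.rpow_pos_of_pos ha' α
    have haRα : a ^ α ≤ R ^ α := Real.rpow_le_rpow ha'.le haR hα
    have hRα : 0 ≤ R ^ α := Real.rpow_nonneg hR α
    have h2 : a ^ α - b ^ α ≤ α * (1 - u) * a ^ α := by
      rw [hbpow]; nlinarith
    have h3 : (a ^ α - b ^ α) * b ≤ (α * (1 - u) * a ^ α) * b :=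
      mul_le_mul_of_nonneg_right h2 hb.le
    calc (a ^ α - b ^ α) * b ≤ (α * (1 - u) * a ^ α) * b := h3
      _ ≤ α * R ^ α * (a - b) := by
          have h4 : a - b = (1 - u) * a := by rw [hbeq]; ring
          rw [h4]
          have h1u : 0 ≤ 1 - u := by linarith
          nlinarith [mul_le_mul_of_nonneg_left haRα (mul_nonneg hα h1u),
            mul_le_mul_of_nonneg_left hba (mul_nonneg (mul_nonneg hα h1u) hRα)]
  · set v : ℝ := a / b with hv
    have hv1 : 1 ≤ v := (one_le_div hb).mpr hba
    have haeq : a = v * b := (div_mul_cancel₀ a hb.ne').symm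
    have hB : v ^ α ≤ 1 + α * (v - 1) := by
      have := rpow_one_add_le_one_add_mul_self (s := v - 1) (by linarith) hα h1.le
      simpa using this
    have hapow : a ^ α = v ^ α * b ^ α := by
      rw [haeq, Real.mul_rpow (by linarith) hb.le]
    have hbα : 0 < b ^ α := Real.rpow_pos_of_pos hb α
    have hbRα : b ^ α ≤ R ^ α := Real.rpow_le_rpow hb.le (hba.trans haR) hα
    have h2 : a ^ α - b ^ α ≤ α * (v - 1) * b ^ α := by
      rw [hapow]; nlinarith
    have h3 : (a ^ α - b ^ α) * b ≤ (α * (v - 1) * b ^ α) * b :=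
      mul_le_mul_of_nonneg_right h2 hb.le
    calc (a ^ α - b ^ α) * b ≤ (α * (v - 1) * b ^ α) * b := h3
      _ = α * b ^ α * (a - b) := by rw [haeq]; ring
      _ ≤ α * R ^ α * (a - b) := by
          have : 0 ≤ a - b := by linarith
          nlinarith [mul_le_mul_of_nonneg_left hbRα hα]

lemma abs_spiralMap (q t : ℝ) (ht : 2 * Real.pi ≤ t) :
    ‖spiralMap (fun s => s ^ (-q)) t‖ = t ^ (-q) := by
  have ht0 : 0 < t := lt_of_lt_of_le (by positivity) ht
  simp only [spiralMap, norm_mul, Complex.norm_real, Real.norm_eq_abs, Complex.norm_exp_ofReal_mul_I, mul_one]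
  exact abs_of_nonneg (Real.rpow_nonneg ht0.le _)

/-- For `0 < r ≤ p ≤ 1`, the radial stretch `g(z) = |z|^{p/r - 1} z`, `g(0) = 0`,
maps `S_r` onto `S_p`, and is Lipschitz on the closed disk of radius `(2π)^{-r}`
centered at `0`, a disk which contains `S_r`. -/
theorem radialStretch_lipschitz_maps_polySpiral (p r : ℝ) (hr : 0 < r) (hrp : r ≤ p) (hp : p ≤ 1)
    (g : ℂ → ℂ) (hg0 : g 0 = 0)
    (hg : ∀ z : ℂ, z ≠ 0 → g z = (‖z‖ ^ (p / r - 1) : ℝ) * z) :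
    g '' polySpiral r = polySpiral p ∧
      polySpiral r ⊆ Metric.closedBall (0 : ℂ) ((2 * Real.pi) ^ (-r)) ∧
      (∃ C > 0, ∀ z ∈ Metric.closedBall (0 : ℂ) ((2 * Real.pi) ^ (-r)),
        ∀ w ∈ Metric.closedBall (0 : ℂ) ((2 * Real.pi) ^ (-r)),
          ‖g z - g w‖ ≤ C * ‖z - w‖) := by
  have h2pi : (0 : ℝ) < 2 * Real.pi := by positivity
  set α : ℝ := p / r - 1 with hαdef
  have hα : 0 ≤ α := by
    have : 1 ≤ p / r := (one_le_div hr).mpr hrp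
    simp [hαdef]; linarith
  set R : ℝ := (2 * Real.pi) ^ (-r) with hRdef
  have hR : 0 < R := Real.rpow_pos_of_pos h2pi _
  -- the map sends the parametrization of `S_r` to that of `S_p`
  have hmap : ∀ t ∈ Set.Ici (2 * Real.pi),
      g (spiralMap (fun s => s ^ (-r)) t) = spiralMap (fun s => s ^ (-p)) t := by
    intro t ht
    have ht' : 2 * Real.pi ≤ t := ht
    have ht0 : 0 < t := lt_of_lt_of_le h2pi ht'
    have habs := abs_spiralMap r t ht'
    have hzne : spiralMap (fun s => s ^ (-r)) t ≠ 0 := by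
      intro h
      rw [h, norm_zero] at habs
      exact absurd habs.symm (ne_of_gt (Real.rpow_pos_of_pos ht0 _))
    rw [hg _ hzne, habs]
    rw [spiralMap, spiralMap]
    push_cast
    rw [← mul_assoc, ← Complex.ofReal_mul]
    congr 2
    rw [← Real.rpow_mul ht0.le, ← Real.rpow_add ht0]
    congr 1
    have hpr : p / r * r = p := div_mul_cancel₀ p hr.ne'
    linear_combination -hpr
  constructor
  · -- image equality
    show g '' polySpiral r = polySpiral p
    unfold polySpiral spiral
    rw [Set.image_union, Set.image_singleton, hg0, Set.image_image]
    congr 1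
    exact Set.image_congr hmap
  constructor
  · -- containment in the disk
    intro z hz
    rcases hz with ⟨t, ht, rfl⟩ | hz
    · rw [Metric.mem_closedBall, dist_zero_right,
        abs_spiralMap r t ht]
      exact Real.rpow_le_rpow_of_nonpos h2pi ht (neg_nonpos.mpr hr.le)
    · simp only [Set.mem_singleton_iff] at hz
      subst hz
      simp [Metric.mem_closedBall, hR.le]
  · -- Lipschitz bound
    refine ⟨(1 + α) * R ^ α, by positivity, ?_⟩
    have habs_g : ∀ z : ℂ, z ≠ 0 → g z = ((‖z‖ ^ α : ℝ) : ℂ) * z := by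
      intro z hz; exact hg z hz
    -- main symmetric claim
    have main : ∀ z w : ℂ, ‖z‖ ≤ R → ‖w‖ ≤ R →
        ‖w‖ ≤ ‖z‖ →
        ‖g z - g w‖ ≤ (1 + α) * R ^ α * ‖z - w‖ := by
      intro z w hzR hwR hwz
      by_cases hz : z = 0
      · have hw : w = 0 := by
          have : ‖w‖ ≤ 0 := by simpa [hz] using hwz
          exact norm_eq_zero.mp (le_antisymm this (norm_nonneg w))
        simp [hz, hw, hg0]
      by_cases hw : w = 0
      · rw [hw, hg0, sub_zero, sub_zero, habs_g z hz]
        set a := ‖z‖ with ha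
        have ha0 : 0 < a := norm_pos_iff.mpr hz
        rw [norm_mul, Complex.norm_real, Real.norm_eq_abs, abs_of_nonneg (Real.rpow_nonneg ha0.le α)]
        have h1 : a ^ α ≤ R ^ α := Real.rpow_le_rpow ha0.le hzR hα
        have h2 : R ^ α ≤ (1 + α) * R ^ α := by nlinarith [Real.rpow_nonneg hR.le α]
        nlinarith [norm_nonneg z]
      · set a := ‖z‖ with ha
        set b := ‖w‖ with hb
        have ha0 : 0 < a := norm_pos_iff.mpr hz
        have hb0 : 0 < b := norm_pos_iff.mpr hw
        have hdecomp : g z - g w =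
            ((a ^ α : ℝ) : ℂ) * (z - w) + ((a ^ α - b ^ α : ℝ) : ℂ) * w := by
          rw [habs_g z hz, habs_g w hw]
          push_cast
          ring
        have hane : 0 ≤ a ^ α - b ^ α := by
          have := Real.rpow_le_rpow hb0.le hwz hα
          linarith
        have tri : ‖g z - g w‖ ≤
            a ^ α * ‖z - w‖ + (a ^ α - b ^ α) * b := by
          rw [hdecomp]
          refine (norm_add_le _ _).trans ?_
          rw [norm_mul, norm_mul, Complex.norm_real, Complex.norm_real, Real.norm_eq_abs, Real.norm_eq_abs,
            abs_of_nonneg (Real.rpow_nonneg ha0.le α), abs_of_nonneg hane]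
        have hkey : (a ^ α - b ^ α) * b ≤ α * R ^ α * (a - b) :=
          key_rpow_lemma hα hb0.le hwz hzR
        have hab : a - b ≤ ‖z - w‖ := by
          have := abs_norm_sub_norm_le z w
          rw [← ha, ← hb] at this
          calc a - b ≤ |a - b| := le_abs_self _
            _ ≤ ‖z - w‖ := this
        have h1 : a ^ α ≤ R ^ α := Real.rpow_le_rpow ha0.le hzR hα
        have hαR : 0 ≤ α * R ^ α := mul_nonneg hα (Real.rpow_nonneg hR.le α)
        calc ‖g z - g w‖
            ≤ a ^ α * ‖z - w‖ + (a ^ α - b ^ α) * b := tri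
          _ ≤ R ^ α * ‖z - w‖ + α * R ^ α * (a - b) := by
              have := mul_le_mul_of_nonneg_right h1 (norm_nonneg (z - w))
              linarith
          _ ≤ R ^ α * ‖z - w‖ + α * R ^ α * ‖z - w‖ := by
              nlinarith
          _ = (1 + α) * R ^ α * ‖z - w‖ := by ring
    intro z hzmem w hwmem
    rw [Metric.mem_closedBall, dist_zero_right] at hzmem hwmem
    rcases le_total ‖w‖ ‖z‖ with h | h
    · exact main z w hzmem hwmem h
    · have := main w z hwmem hzmem h
      rwa [← norm_neg (g w - g z), neg_sub, ← norm_neg (w - z),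
        neg_sub] at this
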